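/- If G is a connected finite simple graph with at least two vertices, then b_dR(G) ≤ Δ(G) + δ(G) − 1, where δ(G) and Δ(G) denote the minimum and maximum degree of G. -/
import Mathlib


/-- A double Roman dominating function (DRDF) on a graph `G`: a function
`f : V → ℕ` taking values in `{0,1,2,3}` such that every vertex assigned `0`
has a neighbor assigned `3` or two distinct neighbors assigned `2`, and every
vertex assigned `1` has a neighbor assigned at least `2`. -/
def IsDRDF {V : Type*} (G : SimpleGraph V) (f : V → ℕ) : Prop :=
  (∀ v, f v ≤ 3) ∧
  (∀ v, f v = 0 →
    (∃ w, G.Adj v w ∧ f w = 3) ∨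
    (∃ w₁ w₂, G.Adj v w₁ ∧ G.Adj v w₂ ∧ w₁ ≠ w₂ ∧ f w₁ = 2 ∧ f w₂ = 2)) ∧
  (∀ v, f v = 1 → ∃ w, G.Adj v w ∧ 2 ≤ f w)

/-- The double Roman domination number `γ_dR(G)`: the minimum weight of a DRDF on `G`. -/
noncomputable def gammaDR {V : Type*} [Fintype V] (G : SimpleGraph V) : ℕ :=
  sInf {k | ∃ f : V → ℕ, IsDRDF G f ∧ ∑ v, f v = k}

/-- The double Roman bondage number `b_dR(G)`: the minimum cardinality of a set
`B` of edges of `G` such that `γ_dR(G - B) > γ_dR(G)`. -/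
noncomputable def bDR {V : Type*} [Fintype V] (G : SimpleGraph V) : ℕ :=
  sInf {k | ∃ B : Finset (Sym2 V), ↑B ⊆ G.edgeSet ∧ B.card = k ∧
    gammaDR G < gammaDR (G.deleteEdges ↑B)}


/-- If `G` is a connected graph with at least two vertices, then
`b_dR(G) ≤ Δ(G) + δ(G) − 1`. -/
theorem bDR_le_maxDegree_add_minDegree {V : Type*} [Fintype V]
    (G : SimpleGraph V) [DecidableRel G.Adj]
    (hconn : G.Connected) (hn : 2 ≤ Fintype.card V) :
    (bDR G : ℤ) ≤ (G.maxDegree : ℤ) + G.minDegree - 1 := by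
  classical
  have hne : Nonempty V := Fintype.card_pos_iff.mp (by omega)
  obtain ⟨v, hv⟩ := G.exists_minimal_degree_vertex
  have hnt : Nontrivial V := Fintype.one_lt_card_iff_nontrivial.mp hn
  obtain ⟨u', hu'⟩ := exists_ne v
  obtain ⟨u, hadj⟩ : ∃ u, G.Adj v u := by
    by_contra hcon
    push_neg at hcon
    obtain ⟨p⟩ := hconn.preconnected v u'
    cases p with
    | nil => exact hu' rfl
    | cons h q => exact hcon _ h
  have hvu : v ≠ u := hadj.ne
  -- The edge set to delete
  set B : Finset (Sym2 V) := G.incidenceFinset v ∪ G.incidenceFinset u with hB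
  set G' : SimpleGraph V := G.deleteEdges ↑B with hG'
  -- membership criterion
  have hmemB : ∀ e : Sym2 V, e ∈ B ↔ e ∈ G.edgeSet ∧ (v ∈ e ∨ u ∈ e) := by
    intro e
    simp only [hB, Finset.mem_union, SimpleGraph.mem_incidenceFinset,
      SimpleGraph.incidenceSet]
    constructor
    · rintro (⟨h1, h2⟩ | ⟨h1, h2⟩) <;> exact ⟨h1, by tauto⟩
    · rintro ⟨h1, h2 | h2⟩
      · exact Or.inl ⟨h1, h2⟩
      · exact Or.inr ⟨h1, h2⟩
  -- u and v are isolated in G'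
  have hGadj : ∀ x y, G'.Adj x y → G.Adj x y := by
    intro x y h
    rw [hG', SimpleGraph.deleteEdges_adj] at h
    exact h.1
  have hviso : ∀ w, ¬ G'.Adj v w := by
    intro w h
    rw [hG', SimpleGraph.deleteEdges_adj] at h
    exact h.2 (by
      rw [Finset.mem_coe, hmemB]
      exact ⟨h.1, Or.inl (Sym2.mem_mk_left _ _)⟩)
  have huiso : ∀ w, ¬ G'.Adj u w := by
    intro w h
    rw [hG', SimpleGraph.deleteEdges_adj] at h
    exact h.2 (by
      rw [Finset.mem_coe, hmemB]
      exact ⟨h.1, Or.inr (Sym2.mem_mk_left _ _)⟩)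
  -- gammaDR sets are nonempty
  have hNE : ∀ H : SimpleGraph V, {k | ∃ f : V → ℕ, IsDRDF H f ∧ ∑ x, f x = k}.Nonempty := by
    intro H
    refine ⟨∑ x : V, (3 : ℕ), fun _ => 3, ⟨fun _ => le_refl 3, fun x h => ?_,
      fun x h => ?_⟩, rfl⟩ <;> simp at h
  -- extract optimal DRDF on G'
  have hmem : gammaDR G' ∈ {k | ∃ f : V → ℕ, IsDRDF G' f ∧ ∑ x, f x = k} :=
    Nat.sInf_mem (hNE G')
  obtain ⟨f, hf, hfsum⟩ := hmem
  obtain ⟨hf3, hf0, hf1⟩ := hf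
  have hfu : 2 ≤ f u := by
    by_contra h
    push_neg at h
    have h0 : f u = 0 ∨ f u = 1 := by omega
    rcases h0 with h0 | h0
    · rcases hf0 u h0 with ⟨w, hw, -⟩ | ⟨w, w2, hw, -, -, -, -⟩ <;> exact absurd hw (huiso w)
    · obtain ⟨w, hw, -⟩ := hf1 u h0
      exact absurd hw (huiso w)
  have hfv : 2 ≤ f v := by
    by_contra h
    push_neg at h
    have h0 : f v = 0 ∨ f v = 1 := by omega
    rcases h0 with h0 | h0
    · rcases hf0 v h0 with ⟨w, hw, -⟩ | ⟨w, w2, hw, -, -, -, -⟩ <;> exact absurd hw (hviso w)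
    · obtain ⟨w, hw, -⟩ := hf1 v h0
      exact absurd hw (hviso w)
  -- the modified function g
  set g : V → ℕ := Function.update (Function.update f v 0) u 3 with hg
  have hgu : g u = 3 := by simp [hg]
  have hgv : g v = 0 := by simp [hg, hvu, Function.update_of_ne hvu]
  have hgo : ∀ x, x ≠ u → x ≠ v → g x = f x := by
    intro x hxu hxv
    simp [hg, Function.update_of_ne hxu, Function.update_of_ne hxv]
  -- g is a DRDF on G
  have hgDRDF : IsDRDF G g := by
    refine ⟨?_, ?_, ?_⟩
    · intro x
      by_cases hxu : x = u
      · subst hxu; omega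
      by_cases hxv : x = v
      · subst hxv; omega
      · rw [hgo x hxu hxv]; exact hf3 x
    · intro x hx
      by_cases hxu : x = u
      · subst hxu; omega
      by_cases hxv : x = v
      · subst hxv
        exact Or.inl ⟨u, hadj, hgu⟩
      · rw [hgo x hxu hxv] at hx
        rcases hf0 x hx with ⟨w, hw, hw3⟩ | ⟨w₁, w₂, hw₁, hw₂, hne12, h2a, h2b⟩
        · have hwu : w ≠ u := by rintro rfl; exact huiso x hw.symm
          have hwv : w ≠ v := by rintro rfl; exact hviso x hw.symm
          exact Or.inl ⟨w, hGadj _ _ hw, by rw [hgo w hwu hwv]; exact hw3⟩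
        · have hw₁u : w₁ ≠ u := by rintro rfl; exact huiso x hw₁.symm
          have hw₁v : w₁ ≠ v := by rintro rfl; exact hviso x hw₁.symm
          have hw₂u : w₂ ≠ u := by rintro rfl; exact huiso x hw₂.symm
          have hw₂v : w₂ ≠ v := by rintro rfl; exact hviso x hw₂.symm
          exact Or.inr ⟨w₁, w₂, hGadj _ _ hw₁, hGadj _ _ hw₂, hne12,
            by rw [hgo w₁ hw₁u hw₁v]; exact h2a,
            by rw [hgo w₂ hw₂u hw₂v]; exact h2b⟩
    · intro x hx
      by_cases hxu : x = u
      · subst hxu; omega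
      by_cases hxv : x = v
      · subst hxv; omega
      · rw [hgo x hxu hxv] at hx
        obtain ⟨w, hw, hw2⟩ := hf1 x hx
        have hwu : w ≠ u := by rintro rfl; exact huiso x hw.symm
        have hwv : w ≠ v := by rintro rfl; exact hviso x hw.symm
        exact ⟨w, hGadj _ _ hw, by rw [hgo w hwu hwv]; exact hw2⟩
  -- weight comparison
  have hsplit : ∀ h : V → ℕ, ∑ x, h x = h u + (h v + ∑ x ∈ (Finset.univ.erase u).erase v, h x) := by
    intro h
    rw [Finset.add_sum_erase _ h (by simp [hvu] : v ∈ Finset.univ.erase u),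
      Finset.add_sum_erase _ h (Finset.mem_univ u)]
  have hrest : ∑ x ∈ (Finset.univ.erase u).erase v, g x
      = ∑ x ∈ (Finset.univ.erase u).erase v, f x := by
    apply Finset.sum_congr rfl
    intro x hx
    simp only [Finset.mem_erase] at hx
    exact hgo x hx.2.1 hx.1
  have hweight : ∑ x, g x < ∑ x, f x := by
    rw [hsplit g, hsplit f, hgu, hgv, hrest]
    omega
  -- gammaDR G < gammaDR G'
  have hgamma : gammaDR G < gammaDR G' := by
    have h1 : gammaDR G ≤ ∑ x, g x := Nat.sInf_le ⟨g, hgDRDF, rfl⟩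
    omega
  -- B.card is in the bondage set
  have hBsub : ↑B ⊆ G.edgeSet := by
    intro e he
    rw [Finset.mem_coe, hmemB] at he
    exact he.1
  have hbdr : bDR G ≤ B.card := Nat.sInf_le ⟨B, hBsub, rfl, hgamma⟩
  -- card bound
  have hinter : 1 ≤ (G.incidenceFinset v ∩ G.incidenceFinset u).card := by
    rw [Nat.one_le_iff_ne_zero, ← Nat.pos_iff_ne_zero, Finset.card_pos]
    refine ⟨s(v, u), Finset.mem_inter.mpr ⟨?_, ?_⟩⟩
    · rw [SimpleGraph.mem_incidenceFinset]
      exact ⟨hadj, Sym2.mem_mk_left _ _⟩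
    · rw [SimpleGraph.mem_incidenceFinset]
      exact ⟨hadj, Sym2.mem_mk_right _ _⟩
  have hcard : B.card + 1 ≤ G.degree v + G.degree u := by
    have := Finset.card_union_add_card_inter (G.incidenceFinset v) (G.incidenceFinset u)
    rw [G.card_incidenceFinset_eq_degree, G.card_incidenceFinset_eq_degree, ← hB] at this
    omega
  have hdu : G.degree u ≤ G.maxDegree := G.degree_le_maxDegree u
  have hdv : G.degree v = G.minDegree := hv.symm
  have : (bDR G : ℤ) ≤ (B.card : ℤ) := by exact_mod_cast hbdr
  have h2 : (B.card : ℤ) + 1 ≤ (G.minDegree : ℤ) + G.maxDegree := by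
    have := hcard
    rw [hdv] at this
    omega
  omega
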